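/- arXiv:2406.15645 — 3 statements merged into one kernel-verified Lean document; each statement's English description precedes it below -/
import Mathlib

section
/- If a real Lie algebra g has a nonzero abelian ideal I, then every linear form ω ∈ g* vanishing on I has Cartan class cl(ω) ≤ dim g − dim I; in particular g admits no linear form of maximal class n = dim g among forms vanishing on I. -/
/-- The characteristic space `C(ω) = ker ω ∩ {X : ω([X,Y]) = 0 ∀ Y}` of a linear
form `ω` on a Lie algebra. -/
def charSpace (K : Type*) [Field K] (L : Type*) [LieRing L] [LieAlgebra K L]
    (ω : Module.Dual K L) : Submodule K L where
  carrier := {X | ω X = 0 ∧ ∀ Y : L, ω ⁅X, Y⁆ = 0}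
  add_mem' := by
    rintro a b ⟨ha1, ha2⟩ ⟨hb1, hb2⟩
    exact ⟨by simp [ha1, hb1], fun Y => by simp [add_lie, ha2 Y, hb2 Y]⟩
  zero_mem' := ⟨by simp, fun Y => by simp⟩
  smul_mem' := by
    rintro c a ⟨h1, h2⟩
    exact ⟨by simp [h1], fun Y => by simp [smul_lie, h2 Y]⟩

/-- The Cartan class of a linear form on a Lie algebra: the codimension of its
characteristic space. -/
noncomputable def cartanClass (K : Type*) [Field K] (L : Type*) [LieRing L] [LieAlgebra K L]
    (ω : Module.Dual K L) : ℕ :=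
  Module.finrank K L - Module.finrank K (charSpace K L ω)


/-- If a real Lie algebra `g` has a nonzero abelian ideal `I`, then every linear
form `ω` vanishing on `I` has Cartan class at most `dim g - dim I`; in particular
such a form is never of maximal class `dim g`. -/
theorem cartanClass_le_of_abelian_ideal
    (g : Type*) [LieRing g] [LieAlgebra ℝ g] [Module.Finite ℝ g]
    (I : LieIdeal ℝ g) (hI : I ≠ ⊥) (hab : IsLieAbelian I)
    (ω : Module.Dual ℝ g) (hω : ∀ X ∈ I, ω X = 0) :
    cartanClass ℝ g ω ≤ Module.finrank ℝ g - Module.finrank ℝ I ∧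
      cartanClass ℝ g ω ≠ Module.finrank ℝ g := by
  have hle : (I : Submodule ℝ g) ≤ charSpace ℝ g ω := by
    intro X hX
    refine ⟨hω X hX, fun Y => ?_⟩
    have h1 : ⁅Y, X⁆ ∈ I := I.lie_mem hX
    rw [← lie_skew]
    exact hω _ (neg_mem h1)
  have hIC : Module.finrank ℝ I ≤ Module.finrank ℝ (charSpace ℝ g ω) :=
    Submodule.finrank_mono hle
  have hI1 : 1 ≤ Module.finrank ℝ I := by
    rw [Nat.one_le_iff_ne_zero]
    intro h
    apply hI
    have hb : (I : Submodule ℝ g) = ⊥ := (Submodule.finrank_eq_zero (S := (I : Submodule ℝ g))).mp h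
    rw [LieSubmodule.eq_bot_iff]
    intro m hm
    exact (Submodule.mem_bot ℝ).mp (hb ▸ hm)
  constructor
  · exact Nat.sub_le_sub_left hIC _
  · have hCle : Module.finrank ℝ (charSpace ℝ g ω) ≤ Module.finrank ℝ g :=
      Submodule.finrank_le _
    have hn : 1 ≤ Module.finrank ℝ g := le_trans hI1 (le_trans hIC hCle)
    unfold cartanClass
    omega
end

section
/- Let a ∈ SL(2p, ℝ) and let ℓ_a = a^{-1} ⊗ Id act on 1-forms via the left translation L_a (with (L_a)^T(e) = a ⊗ Id). The pullback of ω(e) = Σ_i (−da_{i,i+1}(e) + da_{i+1,i}(e))-type expression under left translation by a equals ω(a) if and only if (−1)^i A_{i,2j} = a_{i,2j} and (−1)^i A_{i,2j−1} = −a_{i,2j−1} for all i, j, which holds if and only if a^t a = Id, i.e., a ∈ SO(2p). -/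
open Matrix

/-- The column index `2j - 1` (1-indexed), first member of the `j`-th pair. -/
def colA (p : ℕ) (j : Fin p) : Fin (2 * p) := ⟨2 * j.val, by have := j.isLt; omega⟩

/-- The column index `2j` (1-indexed), second member of the `j`-th pair. -/
def colB (p : ℕ) (j : Fin p) : Fin (2 * p) := ⟨2 * j.val + 1, by have := j.isLt; omega⟩

/-- The Pfaffian form `ω = Σ_{i,j} (a_{i,2j} da_{i,2j-1} - a_{i,2j-1} da_{i,2j})`
at the point `M`, evaluated on the tangent vector `X`. -/
def omegaFun (p : ℕ) (M X : Matrix (Fin (2 * p)) (Fin (2 * p)) ℝ) : ℝ :=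
  ∑ i : Fin (2 * p), ∑ j : Fin p,
    (M i (colB p j) * X i (colA p j) - M i (colA p j) * X i (colB p j))

/-- The `(i,j)` minor `A_{i,j}` of `a` (determinant of `a` with row `i` and
column `j` deleted), expressed through the adjugate: `A_{i,j} = (-1)^{i+j} adj(a)_{j,i}`. -/
noncomputable def minorA (p : ℕ) (a : Matrix (Fin (2 * p)) (Fin (2 * p)) ℝ)
    (i q : Fin (2 * p)) : ℝ :=
  (-1 : ℝ) ^ (i.val + q.val) * a.adjugate q i

/- ### Auxiliary machinery -/

/-- The bilinear expression `Σ_j Σ_k (B_{colB j, k} X_{k, colA j} - B_{colA j, k} X_{k, colB j})`. -/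
def Fform (p : ℕ) (B X : Matrix (Fin (2 * p)) (Fin (2 * p)) ℝ) : ℝ :=
  ∑ j : Fin p, ∑ k : Fin (2 * p),
    (B (colB p j) k * X k (colA p j) - B (colA p j) k * X k (colB p j))

lemma colA_eq_colA_iff {p : ℕ} {j j' : Fin p} : colA p j = colA p j' ↔ j = j' := by
  simp only [colA, Fin.ext_iff]; omega

lemma colB_eq_colB_iff {p : ℕ} {j j' : Fin p} : colB p j = colB p j' ↔ j = j' := by
  simp only [colB, Fin.ext_iff]; omega

lemma colA_ne_colB {p : ℕ} (j j' : Fin p) : colA p j ≠ colB p j' := by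
  simp only [colA, colB, ne_eq, Fin.ext_iff]; omega

lemma col_cases {p : ℕ} (q : Fin (2 * p)) :
    (∃ j, q = colA p j) ∨ (∃ j, q = colB p j) := by
  rcases Nat.even_or_odd q.val with ⟨r, hr⟩ | ⟨r, hr⟩
  · exact Or.inl ⟨⟨r, by omega⟩, by simp only [colA, Fin.ext_iff]; omega⟩
  · exact Or.inr ⟨⟨r, by omega⟩, by simp only [colB, Fin.ext_iff]; omega⟩

lemma omega_mul (p : ℕ) (a X : Matrix (Fin (2 * p)) (Fin (2 * p)) ℝ) :
    omegaFun p a (a * X) = Fform p (aᵀ * a) X := by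
  unfold omegaFun Fform
  rw [Finset.sum_comm]
  refine Finset.sum_congr rfl fun j _ => ?_
  simp only [Matrix.mul_apply, Matrix.transpose_apply, Finset.mul_sum, Finset.sum_mul,
    ← Finset.sum_sub_distrib]
  rw [Finset.sum_comm]
  refine Finset.sum_congr rfl fun k _ => Finset.sum_congr rfl fun i _ => ?_
  ring

lemma omega_one (p : ℕ) (X : Matrix (Fin (2 * p)) (Fin (2 * p)) ℝ) :
    omegaFun p 1 X = Fform p 1 X := by
  unfold omegaFun Fform
  rw [Finset.sum_comm]
  refine Finset.sum_congr rfl fun j _ => ?_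
  simp [Matrix.one_apply, Finset.sum_sub_distrib, eq_comm]

lemma Fform_stdA (p : ℕ) (B : Matrix (Fin (2 * p)) (Fin (2 * p)) ℝ)
    (k : Fin (2 * p)) (j0 : Fin p) :
    Fform p B (Matrix.single k (colA p j0) 1) = B (colB p j0) k := by
  unfold Fform
  rw [Finset.sum_eq_single j0]
  · rw [Finset.sum_eq_single k]
    · simp only [Matrix.single, Matrix.of_apply]
      rw [if_pos ⟨trivial, trivial⟩, if_neg (fun h => colA_ne_colB j0 j0 h.2)]
      ring
    · intro b _ hb
      simp [Matrix.single, hb.symm]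
    · simp
  · intro j _ hj
    have h1 : colA p j0 ≠ colA p j := fun h => hj (colA_eq_colA_iff.mp h.symm)
    have h2 : colA p j0 ≠ colB p j := colA_ne_colB j0 j
    simp [Matrix.single, h1, h2]
  · simp

lemma Fform_stdB (p : ℕ) (B : Matrix (Fin (2 * p)) (Fin (2 * p)) ℝ)
    (k : Fin (2 * p)) (j0 : Fin p) :
    Fform p B (Matrix.single k (colB p j0) 1) = -B (colA p j0) k := by
  unfold Fform
  rw [Finset.sum_eq_single j0]
  · rw [Finset.sum_eq_single k]
    · simp only [Matrix.single, Matrix.of_apply]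
      rw [if_neg (fun h => colA_ne_colB j0 j0 h.2.symm), if_pos ⟨trivial, trivial⟩]
      ring
    · intro b _ hb
      simp [Matrix.single, hb.symm]
    · simp
  · intro j _ hj
    have h1 : colB p j0 ≠ colB p j := fun h => hj (colB_eq_colB_iff.mp h.symm)
    have h2 : colB p j0 ≠ colA p j := (colA_ne_colB j j0).symm
    simp [Matrix.single, h1, h2]
  · simp

/-- The omega-invariance condition is equivalent to `aᵀ * a = 1`. -/
lemma omega_iff_SO (p : ℕ) (a : Matrix (Fin (2 * p)) (Fin (2 * p)) ℝ) :
    (∀ X : Matrix (Fin (2 * p)) (Fin (2 * p)) ℝ,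
        omegaFun p a (a * X) = omegaFun p 1 X) ↔ aᵀ * a = 1 := by
  constructor
  · intro h
    ext q k
    have key : ∀ X, Fform p (aᵀ * a) X = Fform p 1 X := fun X => by
      rw [← omega_mul, ← omega_one]; exact h X
    rcases col_cases (p := p) q with ⟨j, rfl⟩ | ⟨j, rfl⟩
    · have := key (Matrix.single k (colB p j) 1)
      rw [Fform_stdB, Fform_stdB] at this
      exact neg_injective this
    · have := key (Matrix.single k (colA p j) 1)
      rw [Fform_stdA, Fform_stdA] at this
      exact this
  · intro h X
    rw [omega_mul, omega_one, h]

/-- Given `det a = 1`, the minor condition is equivalent to `aᵀ * a = 1`. -/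
lemma minor_iff_SO (p : ℕ) (a : Matrix (Fin (2 * p)) (Fin (2 * p)) ℝ) (ha : a.det = 1) :
    (∀ (i : Fin (2 * p)) (j : Fin p),
        (-1 : ℝ) ^ (i.val + 1) * minorA p a i (colB p j) = a i (colB p j) ∧
        (-1 : ℝ) ^ (i.val + 1) * minorA p a i (colA p j) = -(a i (colA p j))) ↔
      aᵀ * a = 1 := by
  have hB : ∀ (i : Fin (2 * p)) (j : Fin p),
      (-1 : ℝ) ^ (i.val + 1) * minorA p a i (colB p j) = a.adjugate (colB p j) i := by
    intro i j
    unfold minorA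
    rw [← mul_assoc, ← pow_add]
    have he : Even (i.val + 1 + (i.val + (colB p j).val)) := by
      simp only [colB]; exact ⟨i.val + j.val + 1, by ring⟩
    rw [he.neg_one_pow, one_mul]
  have hA : ∀ (i : Fin (2 * p)) (j : Fin p),
      (-1 : ℝ) ^ (i.val + 1) * minorA p a i (colA p j) = -a.adjugate (colA p j) i := by
    intro i j
    unfold minorA
    rw [← mul_assoc, ← pow_add]
    have ho : Odd (i.val + 1 + (i.val + (colA p j).val)) := by
      simp only [colA]; exact ⟨i.val + j.val, by ring⟩
    rw [ho.neg_one_pow, neg_one_mul]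
  have hadj : (∀ (i : Fin (2 * p)) (j : Fin p),
      (-1 : ℝ) ^ (i.val + 1) * minorA p a i (colB p j) = a i (colB p j) ∧
      (-1 : ℝ) ^ (i.val + 1) * minorA p a i (colA p j) = -(a i (colA p j))) ↔
      a.adjugate = aᵀ := by
    constructor
    · intro h
      ext q i
      rcases col_cases (p := p) q with ⟨j, rfl⟩ | ⟨j, rfl⟩
      · have := (h i j).2
        rw [hA i j] at this
        simpa [Matrix.transpose_apply] using neg_injective this
      · have := (h i j).1
        rw [hB i j] at this
        simpa [Matrix.transpose_apply] using this
    · intro h i j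
      refine ⟨?_, ?_⟩
      · rw [hB i j, h]; rfl
      · rw [hA i j, h]; rfl
  rw [hadj]
  constructor
  · intro h
    rw [← h]
    rw [Matrix.adjugate_mul, ha, one_smul]
  · intro h
    have hinv : a⁻¹ = aᵀ := Matrix.inv_eq_left_inv h
    rw [← hinv, Matrix.inv_def, ha, Ring.inverse_one, one_smul]

/-- For `a ∈ SL(2p,ℝ)`, the pullback of `ω` under left translation by `a`
coincides with `ω(a)` iff `(-1)^i A_{i,2j} = a_{i,2j}` and
`(-1)^i A_{i,2j-1} = -a_{i,2j-1}` for all `i,j` (1-indexed), which holds iff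
`aᵀ a = 1`, i.e. `a ∈ SO(2p)`. -/
theorem left_invariance_at_identity_iff_SO (p : ℕ) (hp : 0 < p)
    (a : Matrix (Fin (2 * p)) (Fin (2 * p)) ℝ) (ha : a.det = 1) :
    ((∀ X : Matrix (Fin (2 * p)) (Fin (2 * p)) ℝ,
        omegaFun p a (a * X) = omegaFun p 1 X) ↔
      (∀ (i : Fin (2 * p)) (j : Fin p),
        (-1 : ℝ) ^ (i.val + 1) * minorA p a i (colB p j) = a i (colB p j) ∧
        (-1 : ℝ) ^ (i.val + 1) * minorA p a i (colA p j) = -(a i (colA p j)))) ∧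
    ((∀ X : Matrix (Fin (2 * p)) (Fin (2 * p)) ℝ,
        omegaFun p a (a * X) = omegaFun p 1 X) ↔ aᵀ * a = 1) := by
  refine ⟨?_, omega_iff_SO p a⟩
  rw [omega_iff_SO p a, minor_iff_SO p a ha]
end

section
/- The contact form ω = Σ_{i=1}^{2p} Σ_{j=1}^{p} (a_{i,2j} da_{i,2j−1} − a_{i,2j−1} da_{i,2j}) on SL(2p,ℝ) is invariant under right translation R_a(b) = ba if and only if a ∈ H = {a ∈ SL(2p,ℝ) : a^t J_{2p} a = J_{2p}}, where J_{2p} = Id_p ⊗ J_2 and J_2 = [[0,1],[−1,0]]; i.e., the maximal right-invariance group of ω is the symplectic group Sp(2p,ℝ) (with respect to J_{2p}). -/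
open Matrix

/-- The block-diagonal matrix `J_{2p} = Id_p ⊗ J_2` with `J_2 = [[0,1],[-1,0]]`. -/
def Jmat (p : ℕ) : Matrix (Fin (2 * p)) (Fin (2 * p)) ℝ :=
  Matrix.of fun i j =>
    if j.val = i.val + 1 ∧ i.val % 2 = 0 then 1
    else if i.val = j.val + 1 ∧ j.val % 2 = 0 then -1
    else 0

section Aux

variable {p : ℕ}

/-- Sum over `Fin (2*p)` as a sum over pairs. -/
lemma sum_pair (f : Fin (2 * p) → ℝ) :
    ∑ l, f l = ∑ j : Fin p, (f (colA p j) + f (colB p j)) := by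
  have hb : Function.Bijective
      (fun x : Fin p × Fin 2 => (⟨2 * x.1.val + x.2.val, by omega⟩ : Fin (2 * p))) := by
    rw [Fintype.bijective_iff_injective_and_card]
    constructor
    · rintro ⟨j1, r1⟩ ⟨j2, r2⟩ h
      have h' : 2 * j1.val + r1.val = 2 * j2.val + r2.val := congrArg Fin.val h
      have h1 := r1.isLt; have h2 := r2.isLt
      have : j1.val = j2.val ∧ r1.val = r2.val := by omega
      ext
      · exact this.1
      · exact this.2
    · simp [mul_comm]
  have := Fintype.sum_bijective _ hb
    (fun x : Fin p × Fin 2 => f ⟨2 * x.1.val + x.2.val, by omega⟩) f (fun x => rfl)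
  rw [← this, Fintype.sum_prod_type]
  refine Finset.sum_congr rfl fun j _ => ?_
  rw [Fin.sum_univ_two]
  refine congrArg₂ (· + ·) (congrArg f (Fin.ext ?_)) (congrArg f (Fin.ext ?_)) <;>
    simp [colA, colB]

lemma mul_J_colA (X : Matrix (Fin (2 * p)) (Fin (2 * p)) ℝ) (i : Fin (2 * p)) (j : Fin p) :
    (X * Jmat p) i (colA p j) = - X i (colB p j) := by
  rw [Matrix.mul_apply]
  rw [Finset.sum_eq_single (colB p j)]
  · have : Jmat p (colB p j) (colA p j) = -1 := by
      simp only [Jmat, Matrix.of_apply, colA, colB]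
      split_ifs with h1 h2
      · exfalso; omega
      · rfl
      · exact absurd ⟨trivial, by omega⟩ h2
    rw [this]; ring
  · intro k _ hk
    have hk' : k.val ≠ 2 * j.val + 1 := fun h => hk (Fin.ext (by simpa [colB] using h))
    have : Jmat p k (colA p j) = 0 := by
      simp only [Jmat, Matrix.of_apply, colA]
      rw [if_neg (by rintro ⟨h1, h2⟩; omega), if_neg (by rintro ⟨h1, h2⟩; omega)]
    rw [this, mul_zero]
  · intro h; exact absurd (Finset.mem_univ _) h

lemma mul_J_colB (X : Matrix (Fin (2 * p)) (Fin (2 * p)) ℝ) (i : Fin (2 * p)) (j : Fin p) :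
    (X * Jmat p) i (colB p j) = X i (colA p j) := by
  rw [Matrix.mul_apply]
  rw [Finset.sum_eq_single (colA p j)]
  · have : Jmat p (colA p j) (colB p j) = 1 := by
      simp only [Jmat, Matrix.of_apply, colA, colB]
      split_ifs with h1 h2
      · rfl
      · exfalso; omega
      · exact absurd ⟨trivial, by omega⟩ h1
    rw [this, mul_one]
  · intro k _ hk
    have hk' : k.val ≠ 2 * j.val := fun h => hk (Fin.ext (by simpa [colA] using h))
    have : Jmat p k (colB p j) = 0 := by
      simp only [Jmat, Matrix.of_apply, colB]
      rw [if_neg (by rintro ⟨h1, h2⟩; omega), if_neg (by rintro ⟨h1, h2⟩; omega)]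
    rw [this, mul_zero]
  · intro h; exact absurd (Finset.mem_univ _) h

/-- The key identity: `ω(M, X) = tr (X J Mᵀ)`. -/
lemma omega_eq_trace (M X : Matrix (Fin (2 * p)) (Fin (2 * p)) ℝ) :
    omegaFun p M X = (X * Jmat p * Mᵀ).trace := by
  unfold omegaFun
  rw [Matrix.trace]
  refine Finset.sum_congr rfl fun i _ => ?_
  rw [Matrix.diag_apply, Matrix.mul_apply,
    sum_pair (fun l => (X * Jmat p) i l * Mᵀ l i)]
  refine Finset.sum_congr rfl fun j _ => ?_
  rw [mul_J_colA, mul_J_colB, Matrix.transpose_apply, Matrix.transpose_apply]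
  ring

lemma Jmat_transpose : (Jmat p)ᵀ = - Jmat p := by
  ext i j
  simp only [Matrix.transpose_apply, Matrix.neg_apply, Jmat, Matrix.of_apply]
  split_ifs <;> first | ring1 | (exfalso; omega)

lemma every_col (l : Fin (2 * p)) :
    (∃ j : Fin p, l = colA p j) ∨ (∃ j : Fin p, l = colB p j) := by
  rcases Nat.even_or_odd l.val with h | h
  · left
    exact ⟨⟨l.val / 2, by have := l.isLt; omega⟩, Fin.ext (by
      simp only [colA]
      rcases h with ⟨c, hc⟩; omega)⟩
  · right
    exact ⟨⟨l.val / 2, by have := l.isLt; omega⟩, Fin.ext (by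
      simp only [colB]
      rcases h with ⟨c, hc⟩; omega)⟩

lemma J_mul_J : Jmat p * Jmat p = (-1 : Matrix (Fin (2 * p)) (Fin (2 * p)) ℝ) := by
  ext i l
  rcases every_col l with ⟨j, rfl⟩ | ⟨j, rfl⟩
  · rw [mul_J_colA]
    have : Jmat p i (colB p j) = if i = colA p j then 1 else 0 := by
      simp only [Jmat, Matrix.of_apply, colB, colA, Fin.ext_iff]
      split_ifs <;> first | rfl | (exfalso; omega)
    rw [this]
    by_cases hi : i = colA p j <;> simp [Matrix.one_apply, hi]
  · rw [mul_J_colB]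
    have : Jmat p i (colA p j) = if i = colB p j then -1 else 0 := by
      simp only [Jmat, Matrix.of_apply, colB, colA, Fin.ext_iff]
      split_ifs <;> first | rfl | (exfalso; omega)
    rw [this]
    by_cases hi : i = colB p j <;> simp [Matrix.one_apply, hi]

/-- For a square matrix, `aᵀ J a = J` implies `a J aᵀ = J`. -/
lemma symp_flip (a : Matrix (Fin (2 * p)) (Fin (2 * p)) ℝ)
    (h : aᵀ * Jmat p * a = Jmat p) : a * Jmat p * aᵀ = Jmat p := by
  set J := Jmat p
  have hJJ : J * J = -1 := J_mul_J
  have h1 : ((-J) * aᵀ * J) * a = 1 := by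
    have : (-J) * (aᵀ * J * a) = (-J) * J := by rw [h]
    calc ((-J) * aᵀ * J) * a = (-J) * (aᵀ * J * a) := by
          simp only [Matrix.mul_assoc]
      _ = (-J) * J := by rw [h]
      _ = 1 := by rw [Matrix.neg_mul, hJJ]; simp
  have h2 : a * ((-J) * aᵀ * J) = 1 := mul_eq_one_comm.mp h1
  have h3 : a * ((-J) * aᵀ * J) * (-J) = -J := by rw [h2, Matrix.one_mul]
  have h4 : a * (-J) * aᵀ * (J * (-J)) = -J := by
    calc a * (-J) * aᵀ * (J * (-J)) = a * ((-J) * aᵀ * J) * (-J) := by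
          simp only [Matrix.mul_assoc]
      _ = -J := h3
  have hJnJ : J * (-J) = 1 := by rw [Matrix.mul_neg, hJJ]; simp
  rw [hJnJ, Matrix.mul_one] at h4
  have h5 : -(a * J * aᵀ) = -J := by
    calc -(a * J * aᵀ) = a * (-J) * aᵀ := by
          rw [Matrix.mul_neg, Matrix.neg_mul]
      _ = -J := h4
  exact neg_injective h5

lemma trace_std_mul (C : Matrix (Fin (2 * p)) (Fin (2 * p)) ℝ) (k l : Fin (2 * p)) :
    (Matrix.single l k (1 : ℝ) * C).trace = C k l := by
  rw [Matrix.trace]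
  rw [Finset.sum_eq_single l]
  · rw [Matrix.diag_apply, Matrix.mul_apply, Finset.sum_eq_single k]
    · simp [Matrix.single]
    · intro m _ hm
      simp [Matrix.single, hm.symm]
    · intro h; exact absurd (Finset.mem_univ _) h
  · intro i _ hi
    rw [Matrix.diag_apply, Matrix.mul_apply]
    apply Finset.sum_eq_zero
    intro m _
    simp [Matrix.single, Ne.symm hi]
  · intro h; exact absurd (Finset.mem_univ _) h

end Aux

/-- The contact form `ω` on `SL(2p,ℝ)` is invariant under right translation
`R_a : b ↦ b a` (as a form on `SL(2p,ℝ)`) if and only if `aᵀ J_{2p} a = J_{2p}`,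
i.e. `a` belongs to the symplectic group `Sp(2p,ℝ)` with respect to `J_{2p}`;
this is the maximal right-invariance group of `ω`. -/
theorem right_invariance_iff_symplectic (p : ℕ) (hp : 0 < p)
    (a : Matrix (Fin (2 * p)) (Fin (2 * p)) ℝ) (ha : a.det = 1) :
    (∀ b X : Matrix (Fin (2 * p)) (Fin (2 * p)) ℝ, b.det = 1 →
        (b.adjugate * X).trace = 0 →
        omegaFun p (b * a) (X * a) = omegaFun p b X) ↔
      aᵀ * Jmat p * a = Jmat p := by
  constructor
  · intro h
    -- First show a * J * aᵀ = J using b = 1 and traceless X.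
    set C : Matrix (Fin (2 * p)) (Fin (2 * p)) ℝ := a * Jmat p * aᵀ - Jmat p with hC
    have hCanti : Cᵀ = -C := by
      rw [hC, Matrix.transpose_sub, Matrix.transpose_mul, Matrix.transpose_mul,
        Matrix.transpose_transpose, Jmat_transpose]
      simp only [Matrix.mul_neg, Matrix.neg_mul, neg_sub, Matrix.mul_assoc]
      abel
    have key : ∀ X : Matrix (Fin (2 * p)) (Fin (2 * p)) ℝ, X.trace = 0 →
        (X * C).trace = 0 := by
      intro X hX
      have h1 := h 1 X (Matrix.det_one) (by rwa [Matrix.adjugate_one, Matrix.one_mul])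
      rw [omega_eq_trace, omega_eq_trace] at h1
      rw [Matrix.one_mul, Matrix.transpose_one, Matrix.mul_one] at h1
      rw [hC, Matrix.mul_sub, Matrix.trace_sub]
      have h2 : X * (a * Jmat p * aᵀ) = X * a * Jmat p * aᵀ := by
        simp only [Matrix.mul_assoc]
      rw [h2, h1, sub_self]
    have hC0 : C = 0 := by
      ext k l
      by_cases hkl : k = l
      · subst hkl
        have h1 : Cᵀ k k = (-C) k k := by rw [hCanti]
        rw [Matrix.transpose_apply, Matrix.neg_apply] at h1
        have : C k k = 0 := by linarith
        simpa using this
      · have h1 := key (Matrix.single l k (1 : ℝ))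
          (Matrix.trace_single_eq_of_ne l k 1 (Ne.symm hkl))
        rw [trace_std_mul] at h1
        simpa using h1
    have hflip : a * Jmat p * aᵀ = Jmat p := sub_eq_zero.mp hC0
    have := symp_flip aᵀ (by rwa [Matrix.transpose_transpose])
    rwa [Matrix.transpose_transpose] at this
  · intro hs
    have hflip : a * Jmat p * aᵀ = Jmat p := symp_flip a hs
    intro b X _ _
    rw [omega_eq_trace, omega_eq_trace]
    congr 1
    rw [Matrix.transpose_mul]
    calc X * a * Jmat p * (aᵀ * bᵀ) = X * (a * Jmat p * aᵀ) * bᵀ := by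
          simp only [Matrix.mul_assoc]
      _ = X * Jmat p * bᵀ := by rw [hflip]
end
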